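/- Let L be a field containing F complete with respect to a valuation extending v_p. (i) For every a ∈ O_F^×, every f ∈ L[[u]], and all 0 < s ≤ r: v^{[s,r]}(f∘[a]) = v^{[s,r]}(f). (ii) For all 0 < s ≤ r there exists a natural number N such that for every a ∈ 1 + π^N·O_F and every f ∈ L[[u]]: v^{[s,r]}(f∘[a] − f) ≥ v^{[s,r]}(f) + 1. -/

import Mathlib

/-- Formal composition `f ∘ s` of power series (intended for `s` with zero constant term). -/
noncomputable def pscomp {L : Type*} [CommRing L] (f s : PowerSeries L) : PowerSeries L :=
  PowerSeries.mk fun n =>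
    ∑ m ∈ Finset.range (n + 1), PowerSeries.coeff m f * PowerSeries.coeff n (s ^ m)



open PowerSeries Finset

section Helpers

variable {L : Type*} [Field L] (v : L → EReal)
  (hv0 : v 0 = ⊤) (hv1 : v 1 = 0)
  (hvmul : ∀ x y : L, v (x * y) = v x + v y)
  (hvadd : ∀ x y : L, min (v x) (v y) ≤ v (x + y))

include hv0 hv1 hvmul in
lemma vne_bot : ∀ x : L, v x ≠ ⊥ := by
  intro x
  by_cases hx : x = 0
  · simp [hx, hv0]
  · intro hb
    have h := hvmul x x⁻¹
    rw [mul_inv_cancel₀ hx, hv1, hb, EReal.bot_add] at h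
    exact absurd h.symm (by simp)

include hv1 hvmul in
lemma v_neg (x : L) : v (-x) = v x := by
  have key : ∀ w : EReal, (0 : EReal) = w + w → w = 0 := by
    intro w hw
    induction w using EReal.rec with
    | bot => rw [EReal.bot_add] at hw; simp at hw
    | coe y =>
        rw [← EReal.coe_add] at hw
        have : y + y = 0 := by exact_mod_cast hw.symm
        have : y = 0 := by linarith
        exact_mod_cast this
    | top => rw [EReal.top_add_top] at hw; simp at hw
  have h := hvmul (-1) (-1)
  rw [neg_mul_neg, one_mul, hv1] at h
  have hm : v (-1 : L) = 0 := key _ h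
  rw [show -x = (-1) * x by ring, hvmul, hm, zero_add]

include hvadd in
lemma v_add0 {β : EReal} {x y : L} (hx : β ≤ v x) (hy : β ≤ v y) : β ≤ v (x + y) :=
  le_trans (le_min hx hy) (hvadd x y)

include hv1 hvmul hvadd in
lemma v_sub0 {β : EReal} {x y : L} (hx : β ≤ v x) (hy : β ≤ v y) : β ≤ v (x - y) := by
  rw [sub_eq_add_neg]
  exact v_add0 v hvadd hx (by rw [v_neg v hv1 hvmul]; exact hy)

include hv0 hvadd in
lemma v_sum0 {β : EReal} {ι : Type*} (s : Finset ι) (f : ι → L)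
    (h : ∀ i ∈ s, β ≤ v (f i)) : β ≤ v (∑ i ∈ s, f i) := by
  induction s using Finset.cons_induction with
  | empty => simp [hv0]
  | cons a s ha IH =>
      rw [Finset.sum_cons]
      exact v_add0 v hvadd (h a (Finset.mem_cons_self a s))
        (IH fun i hi => h i (Finset.mem_cons_of_mem hi))

include hv0 hv1 hvadd in
lemma v_natcast (n : ℕ) : (0 : EReal) ≤ v (n : L) := by
  induction n with
  | zero => simp [hv0]
  | succ n IH =>
      push_cast
      exact v_add0 v hvadd IH (le_of_eq hv1.symm)

include hvadd in
lemma v_add_c {β c : EReal} {x y : L} (hx : β ≤ v x + c) (hy : β ≤ v y + c) :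
    β ≤ v (x + y) + c := by
  rcases le_total (v x) (v y) with h | h
  · have h2 : v x ≤ v (x + y) := le_trans (le_of_eq (min_eq_left h).symm) (hvadd x y)
    exact le_trans hx (add_le_add h2 le_rfl)
  · have h2 : v y ≤ v (x + y) := le_trans (le_of_eq (min_eq_right h).symm) (hvadd x y)
    exact le_trans hy (add_le_add h2 le_rfl)

include hv1 hvmul hvadd in
lemma v_sub_c {β c : EReal} {x y : L} (hx : β ≤ v x + c) (hy : β ≤ v y + c) :
    β ≤ v (x - y) + c := by
  rw [sub_eq_add_neg]
  exact v_add_c v hvadd hx (by rw [v_neg v hv1 hvmul]; exact hy)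

include hv0 hvadd in
lemma v_sum_c {β c : EReal} (hc : c ≠ ⊥) {ι : Type*} (s : Finset ι) (f : ι → L)
    (h : ∀ i ∈ s, β ≤ v (f i) + c) : β ≤ v (∑ i ∈ s, f i) + c := by
  induction s using Finset.cons_induction with
  | empty => simp [hv0, EReal.top_add_of_ne_bot hc]
  | cons a s ha IH =>
      rw [Finset.sum_cons]
      exact v_add_c v hvadd (h a (Finset.mem_cons_self a s))
        (IH fun i hi => h i (Finset.mem_cons_of_mem hi))

include hv1 hvmul in
lemma v_pow_unit {a : L} (ha : v a = 0) (n : ℕ) : v (a ^ n) = 0 := by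
  induction n with
  | zero => simpa using hv1
  | succ n IH => rw [pow_succ, hvmul, IH, ha, add_zero]

include hvmul hv1 in
lemma v_pow_gen {x : L} {c : ℝ} (hx : v x = (c : EReal)) (n : ℕ) :
    v (x ^ n) = ((n * c : ℝ) : EReal) := by
  induction n with
  | zero => rw [pow_zero, hv1]; norm_num
  | succ n IH =>
      rw [pow_succ, hvmul, IH, hx, ← EReal.coe_add]
      norm_cast
      push_cast
      ring

include hv1 hvmul hvadd in
lemma v_one_sub {y : L} (hy : 0 < v y) : v (1 - y) = 0 := by
  have h1 : (0 : EReal) ≤ v (1 - y) := by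
    rw [sub_eq_add_neg]
    refine v_add0 v hvadd (le_of_eq hv1.symm) ?_
    rw [v_neg v hv1 hvmul]
    exact hy.le
  rcases lt_or_ge 0 (v (1 - y)) with hgt | hle
  · exfalso
    have h2 := hvadd (1 - y) y
    rw [sub_add_cancel, hv1] at h2
    exact absurd (lt_of_lt_of_le (lt_min hgt hy) h2) (lt_irrefl 0)
  · exact le_antisymm hle h1




include hv0 hv1 hvmul hvadd in
lemma coeff_pow_integral {g : PowerSeries L} (hint : ∀ n, (0 : EReal) ≤ v (coeff n g)) :
    ∀ m n, (0 : EReal) ≤ v (coeff n (g ^ m)) := by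
  intro m
  induction m with
  | zero =>
      intro n
      rw [pow_zero, PowerSeries.coeff_one]
      split_ifs <;> simp [hv0, hv1]
  | succ m IH =>
      intro n
      rw [pow_succ, PowerSeries.coeff_mul]
      refine v_sum0 v hv0 hvadd _ _ fun p hp => ?_
      rw [hvmul]
      calc (0 : EReal) = 0 + 0 := by norm_num
        _ ≤ _ := add_le_add (IH p.1) (hint p.2)

lemma coeff_pow_lt {g : PowerSeries L} (hg0 : coeff 0 g = 0) {n m : ℕ} (h : n < m) :
    coeff n (g ^ m) = 0 := by
  have hx : (X : PowerSeries L) ∣ g := X_dvd_iff.mpr (by rw [← PowerSeries.coeff_zero_eq_constantCoeff]; exact hg0)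
  have : (X : PowerSeries L) ^ m ∣ g ^ m := pow_dvd_pow_of_dvd hx m
  exact X_pow_dvd_iff.mp this n h

lemma coeff_pow_diag {g : PowerSeries L} (hg0 : coeff 0 g = 0) (m : ℕ) :
    coeff m (g ^ m) = (coeff 1 g) ^ m := by
  induction m with
  | zero => simp
  | succ m IH =>
      rw [pow_succ, PowerSeries.coeff_mul]
      rw [Finset.sum_eq_single (m, 1)]
      · rw [IH, pow_succ]
      · rintro ⟨i, j⟩ hmem hne
        rw [Finset.HasAntidiagonal.mem_antidiagonal] at hmem
        rcases Nat.lt_or_ge j 1 with hj | hj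
        · interval_cases j
          simp only [hg0, mul_zero]
        · rcases Nat.lt_or_ge j 2 with hj2 | hj2
          · interval_cases j
            · exfalso; apply hne; simp at hmem ⊢; omega
          · have : i < m := by omega
            rw [coeff_pow_lt hg0 this, zero_mul]
      · intro hmem
        exfalso; apply hmem; rw [Finset.HasAntidiagonal.mem_antidiagonal]


include hv0 hv1 hvmul hvadd in
lemma v_coeff_pow_ge {h : PowerSeries L} (h0 : coeff 0 h = 0)
    (hint : ∀ i, (0 : EReal) ≤ v (coeff i h)) {β : EReal} (hβ : 0 ≤ β) :
    ∀ j, 1 ≤ j → ∀ m, (∀ i, i + j ≤ m + 1 → β ≤ v (coeff i h)) →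
      β ≤ v (coeff m (h ^ j)) := by
  intro j hj
  induction j, hj using Nat.le_induction with
  | base =>
      intro m hm
      rw [pow_one]
      exact hm m (by omega)
  | succ j hj IH =>
      intro m hm
      rw [pow_succ, PowerSeries.coeff_mul]
      refine v_sum0 v hv0 hvadd _ _ ?_
      rintro ⟨i, l⟩ hp
      rw [Finset.HasAntidiagonal.mem_antidiagonal] at hp
      rcases Nat.eq_zero_or_pos l with rfl | hl
      · simp only [h0, mul_zero, hv0]
        exact le_top
      · rw [hvmul]
        have hi : β ≤ v (coeff i (h ^ j)) := by
          refine IH i fun i' hi' => hm i' (by omega)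
        calc β = β + 0 := by rw [add_zero]
          _ ≤ _ := add_le_add hi (hint l)

include hv0 hvmul hvadd in
lemma vt_coeff_pow {h : PowerSeries L} {t : ℝ}
    (hstar : ∀ k : ℕ, (((1 + t : ℝ)) : EReal) ≤ v (coeff k h) + (((k : ℝ) * t : ℝ) : EReal)) :
    ∀ j : ℕ, 1 ≤ j → ∀ m : ℕ, (((j : ℝ) * (1 + t) : ℝ) : EReal)
      ≤ v (coeff m (h ^ j)) + (((m : ℝ) * t : ℝ) : EReal) := by
  intro j hj
  induction j, hj using Nat.le_induction with
  | base =>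
      intro m
      rw [pow_one]
      have h1 : ((((1 : ℕ) : ℝ) * (1 + t) : ℝ) : EReal) = (((1 + t : ℝ)) : EReal) := by
        norm_num
      rw [h1]
      exact hstar m
  | succ j hj IH =>
      intro m
      rw [pow_succ, PowerSeries.coeff_mul]
      refine v_sum_c v hv0 hvadd (EReal.coe_ne_bot _) _ _ ?_
      rintro ⟨i, l⟩ hp
      rw [Finset.HasAntidiagonal.mem_antidiagonal] at hp
      rw [hvmul]
      have hsplit : (((m : ℝ) * t : ℝ) : EReal)
          = (((i : ℝ) * t : ℝ) : EReal) + (((l : ℝ) * t : ℝ) : EReal) := by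
        rw [← EReal.coe_add]
        norm_cast
        rw [← hp]
        push_cast
        ring
      rw [hsplit, add_add_add_comm]
      calc (((((j + 1 : ℕ)) : ℝ) * (1 + t) : ℝ) : EReal)
          = (((j : ℝ) * (1 + t) : ℝ) : EReal) + (((1 + t : ℝ)) : EReal) := by
            rw [← EReal.coe_add]; norm_cast; push_cast; ring
        _ ≤ _ := add_le_add (IH i) (hstar l)

end Helpers

lemma ereal_sub_le {x : EReal} (hx : x ≠ ⊥) {b c : ℝ} (h : (b : EReal) ≤ x + (c : EReal)) :
    ((b - c : ℝ) : EReal) ≤ x := by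
  induction x using EReal.rec with
  | bot => exact absurd rfl hx
  | coe y =>
      rw [← EReal.coe_add] at h
      have : b ≤ y + c := by exact_mod_cast h
      exact_mod_cast (by linarith : b - c ≤ y)
  | top => exact le_top

section Main

variable {L : Type*} [Field L] (v : L → EReal)
  (hv0 : v 0 = ⊤) (hv1 : v 1 = 0)
  (hvmul : ∀ x y : L, v (x * y) = v x + v y)
  (hvadd : ∀ x y : L, min (v x) (v y) ≤ v (x + y))

include hv0 hv1 hvmul hvadd in
lemma part_i (a : L) (ha : v a = 0)
    (sa : PowerSeries L)
    (h0 : PowerSeries.coeff 0 sa = 0) (h1 : PowerSeries.coeff 1 sa = a)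
    (hint : ∀ n : ℕ, (0 : EReal) ≤ v (PowerSeries.coeff n sa))
    (f : PowerSeries L) (s r : ℝ) (hs : 0 < s) (hsr : s ≤ r) :
    (⨅ t : Set.Icc s r, ⨅ n : ℕ,
        (v (PowerSeries.coeff n (pscomp f sa)) + (((n : ℝ) * (t : ℝ) : ℝ) : EReal)))
      = ⨅ t : Set.Icc s r, ⨅ n : ℕ,
          (v (PowerSeries.coeff n f) + (((n : ℝ) * (t : ℝ) : ℝ) : EReal)) := by
  have hM : ∀ m n : ℕ, (0 : EReal) ≤ v (coeff n (sa ^ m)) :=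
    coeff_pow_integral v hv0 hv1 hvmul hvadd hint
  have hc : ∀ n, coeff n (pscomp f sa)
      = ∑ m ∈ Finset.range (n + 1), coeff m f * coeff n (sa ^ m) := by
    intro n; simp [pscomp, PowerSeries.coeff_mk]
  refine iInf_congr fun t => ?_
  have ht0 : (0 : ℝ) ≤ (t : ℝ) := (hs.trans_le t.2.1).le
  have chain : ∀ n m : ℕ, m ≤ n →
      v (coeff m f) + (((m : ℝ) * (t : ℝ) : ℝ) : EReal)
        ≤ v (coeff m f * coeff n (sa ^ m)) + (((n : ℝ) * (t : ℝ) : ℝ) : EReal) := by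
    intro n m hmn
    rw [hvmul, add_assoc]
    refine add_le_add le_rfl ?_
    calc (((m : ℝ) * (t : ℝ) : ℝ) : EReal) ≤ (((n : ℝ) * (t : ℝ) : ℝ) : EReal) := by
          exact_mod_cast mul_le_mul_of_nonneg_right (Nat.cast_le.mpr hmn) ht0
      _ = 0 + _ := (zero_add _).symm
      _ ≤ _ := add_le_add (hM m n) le_rfl
  refine le_antisymm (le_iInf fun n => ?_) (le_iInf fun n => ?_)
  · -- v^{t}(f∘sa) ≤ v coeff n f + nt, by strong induction
    induction n using Nat.strong_induction_on with
    | _ n IH =>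
      have hva : v ((coeff 1 sa) ^ n) = 0 := v_pow_unit v hv1 hvmul (h1 ▸ ha) n
      have hkey : coeff n f * (coeff 1 sa) ^ n
          = coeff n (pscomp f sa) - ∑ m ∈ Finset.range n, coeff m f * coeff n (sa ^ m) := by
        rw [hc n, Finset.sum_range_succ, coeff_pow_diag h0]
        ring
      have hrw : v (coeff n f) = v (coeff n f * (coeff 1 sa) ^ n) := by
        rw [hvmul, hva, add_zero]
      rw [hrw, hkey]
      refine v_sub_c v hv1 hvmul hvadd (iInf_le _ n) ?_
      refine v_sum_c v hv0 hvadd (EReal.coe_ne_bot _) _ _ fun m hm => ?_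
      rw [Finset.mem_range] at hm
      exact le_trans (IH m hm) (chain n m hm.le)
  · -- v^{t}(f) ≤ v coeff n (f∘sa) + nt
    rw [hc n]
    refine v_sum_c v hv0 hvadd (EReal.coe_ne_bot _) _ _ fun m hm => ?_
    rw [Finset.mem_range] at hm
    exact le_trans (iInf_le _ m) (chain n m (Nat.lt_succ_iff.mp hm))



include hv0 hv1 hvmul hvadd in
lemma hQ_lemma (π : L) (q e : ℕ) (hq : 2 ≤ q) (he : 0 < e)
    (hπ : v π = ((1 / (e : ℝ) : ℝ) : EReal))
    (N : ℕ) (hNe : e ≤ N)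
    (a : L) (hva : (((N : ℝ) / (e : ℝ) : ℝ) : EReal) ≤ v (a - 1))
    (sa : PowerSeries L)
    (h0 : PowerSeries.coeff 0 sa = 0) (h1 : PowerSeries.coeff 1 sa = a)
    (hint : ∀ n : ℕ, (0 : EReal) ≤ v (PowerSeries.coeff n sa))
    (hcomp : pscomp sa (PowerSeries.X ^ q + PowerSeries.C π * PowerSeries.X)
      = sa ^ q + PowerSeries.C π * sa) :
    ∀ k : ℕ, 2 ≤ k → k ≤ N + 1 →
      ((((N : ℝ) - k + 1) / (e : ℝ) : ℝ) : EReal) ≤ v (coeff k sa) := by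
  have hepos : (0 : ℝ) < (e : ℝ) := by exact_mod_cast he
  set h : PowerSeries L := sa - PowerSeries.X with hh
  have hh0 : coeff 0 h = 0 := by
    rw [hh, map_sub, h0, PowerSeries.coeff_X, if_neg (by omega : ¬ (0:ℕ) = 1), sub_zero]
  have hh1 : coeff 1 h = a - 1 := by simp [hh, h1, PowerSeries.coeff_X]
  have hhk : ∀ k : ℕ, 2 ≤ k → coeff k h = coeff k sa := by
    intro k hk
    rw [hh, map_sub, PowerSeries.coeff_X, if_neg (by omega : ¬ k = 1), sub_zero]
  have hva0 : (0 : EReal) ≤ v (a - 1) :=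
    le_trans (by exact_mod_cast div_nonneg (Nat.cast_nonneg N) hepos.le) hva
  have hhint : ∀ i : ℕ, (0 : EReal) ≤ v (coeff i h) := by
    intro i
    match i with
    | 0 => rw [hh0, hv0]; exact le_top
    | 1 => rw [hh1]; exact hva0
    | (i+2) => rw [hhk (i+2) (by omega)]; exact hint (i+2)
  have hPc : ∀ n : ℕ, coeff n (PowerSeries.X ^ q + PowerSeries.C π * PowerSeries.X : PowerSeries L)
      = (if n = q then 1 else 0) + π * (if n = 1 then 1 else 0) := by
    intro n
    simp [PowerSeries.coeff_X_pow, PowerSeries.coeff_X]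
  have hP0 : coeff 0 (PowerSeries.X ^ q + PowerSeries.C π * PowerSeries.X : PowerSeries L) = 0 := by
    have hq0 : ¬ (0:ℕ) = q := by omega
    rw [hPc, if_neg hq0, if_neg (by omega : ¬ (0:ℕ) = 1), mul_zero, add_zero]
  have hP1 : coeff 1 (PowerSeries.X ^ q + PowerSeries.C π * PowerSeries.X : PowerSeries L) = π := by
    rw [hPc, if_neg (by omega : ¬ (1:ℕ) = q), if_pos rfl, mul_one, zero_add]
  have hPint : ∀ n : ℕ, (0 : EReal) ≤ v (coeff n (PowerSeries.X ^ q + PowerSeries.C π * PowerSeries.X : PowerSeries L)) := by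
    intro n
    rw [hPc]
    refine v_add0 v hvadd ?_ ?_
    · split_ifs <;> simp [hv0, hv1]
    · split_ifs with hn
      · rw [mul_one, hπ]
        exact_mod_cast div_nonneg zero_le_one hepos.le
      · rw [mul_zero, hv0]; exact le_top
  have hPM : ∀ m n : ℕ, (0 : EReal) ≤ v (coeff n ((PowerSeries.X ^ q + PowerSeries.C π * PowerSeries.X : PowerSeries L) ^ m)) :=
    coeff_pow_integral v hv0 hv1 hvmul hvadd hPint
  have hPdiag : ∀ k : ℕ, coeff k ((PowerSeries.X ^ q + PowerSeries.C π * PowerSeries.X : PowerSeries L) ^ k) = π ^ k := by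
    intro k
    rw [coeff_pow_diag hP0, hP1]
  have hFE : ∀ k : ℕ, ∑ m ∈ Finset.range (k+1),
      coeff m sa * coeff k ((PowerSeries.X ^ q + PowerSeries.C π * PowerSeries.X : PowerSeries L) ^ m)
      = coeff k (sa ^ q) + π * coeff k sa := by
    intro k
    have := congrArg (coeff k) hcomp
    simpa [pscomp, PowerSeries.coeff_mk, map_add, PowerSeries.coeff_C_mul] using this
  have hsa_bin : sa = PowerSeries.X + h := by rw [hh]; ring
  have hbin : ∀ m k : ℕ, coeff k (sa ^ m)
      = (∑ i ∈ Finset.range m, coeff k (PowerSeries.X ^ i * h ^ (m - i)) * ((m.choose i : ℕ) : L))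
        + (if k = m then 1 else 0) := by
    intro m k
    conv_lhs => rw [hsa_bin]
    rw [add_pow, map_sum, Finset.sum_range_succ]
    congr 1
    · refine Finset.sum_congr rfl fun i hi => ?_
      rw [show ((m.choose i : ℕ) : PowerSeries L) = PowerSeries.C ((m.choose i : ℕ) : L) from
        (map_natCast _ _).symm, PowerSeries.coeff_mul_C]
    · simp [PowerSeries.coeff_X_pow]
  intro k
  induction k using Nat.strong_induction_on with
  | _ k IH =>
  intro hk2 hkN
  obtain ⟨k2, rfl⟩ : ∃ k2, k = k2 + 2 := ⟨k - 2, by omega⟩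
  set β : ℝ := ((N : ℝ) - (k2 + 2) + 2) / e with hβdef
  have hkNr : ((k2 + 2 : ℕ) : ℝ) ≤ (N : ℝ) + 1 := by exact_mod_cast hkN
  have hβ0 : (0 : ℝ) ≤ β := by
    apply div_nonneg _ hepos.le
    push_cast at hkNr ⊢
    linarith
  have hβN : β ≤ (N : ℝ) / e := by
    apply (div_le_div_iff_of_pos_right hepos).mpr
    push_cast
    linarith
  have hcoeffs : ∀ i : ℕ, i + 1 ≤ k2 + 2 → ((β : ℝ) : EReal) ≤ v (coeff i h) := by
    intro i hi
    match i with
    | 0 => rw [hh0, hv0]; exact le_top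
    | 1 =>
        rw [hh1]
        exact le_trans (by exact_mod_cast hβN) hva
    | (i+2) =>
        rw [hhk (i+2) (by omega)]
        refine le_trans ?_ (IH (i+2) (by omega) (by omega) (by omega))
        apply EReal.coe_le_coe_iff.mpr
        apply (div_le_div_iff_of_pos_right hepos).mpr
        have hii : i + 1 ≤ k2 := by omega
        have hir : (i : ℝ) + 1 ≤ (k2 : ℝ) := by exact_mod_cast hii
        push_cast
        linarith
  -- the functional-equation identity
  have hFEk := hFE (k2 + 2)
  have hsum : ∑ m ∈ Finset.range (k2 + 3),
      coeff m sa * coeff (k2+2) ((PowerSeries.X ^ q + PowerSeries.C π * PowerSeries.X : PowerSeries L) ^ m)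
      = (∑ i ∈ Finset.range k2, coeff (i+2) sa * coeff (k2+2) ((PowerSeries.X ^ q + PowerSeries.C π * PowerSeries.X : PowerSeries L) ^ (i+2)))
        + coeff 1 sa * coeff (k2+2) ((PowerSeries.X ^ q + PowerSeries.C π * PowerSeries.X : PowerSeries L) ^ 1)
        + coeff (k2+2) sa * π ^ (k2+2) := by
    rw [show k2 + 3 = (k2 + 2) + 1 from rfl, Finset.sum_range_succ, Finset.sum_range_succ',
      Finset.sum_range_succ', h0, zero_mul, add_zero, hPdiag]
  have hP1k : coeff (k2+2) ((PowerSeries.X ^ q + PowerSeries.C π * PowerSeries.X : PowerSeries L) ^ 1)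
      = (if k2 + 2 = q then 1 else 0) := by
    rw [pow_one, hPc, if_neg (by omega : ¬ k2 + 2 = 1), mul_zero, add_zero]
  have hbinq := hbin q (k2+2)
  rw [hsum, hP1k, hbinq, h1] at hFEk
  have hid : coeff (k2+2) sa * (π - π ^ (k2+2))
      = (∑ i ∈ Finset.range k2, coeff (i+2) sa * coeff (k2+2) ((PowerSeries.X ^ q + PowerSeries.C π * PowerSeries.X : PowerSeries L) ^ (i+2)))
        + (a - 1) * (if k2 + 2 = q then 1 else 0)
        - ∑ i ∈ Finset.range q, coeff (k2+2) (PowerSeries.X ^ i * h ^ (q - i)) * ((q.choose i : ℕ) : L) := by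
    linear_combination -hFEk
  -- bound the right-hand side
  have hb1 : ((β : ℝ) : EReal) ≤ v (∑ i ∈ Finset.range k2,
      coeff (i+2) sa * coeff (k2+2) ((PowerSeries.X ^ q + PowerSeries.C π * PowerSeries.X : PowerSeries L) ^ (i+2))) := by
    refine v_sum0 v hv0 hvadd _ _ fun i hi => ?_
    rw [Finset.mem_range] at hi
    rw [hvmul, ← hhk (i+2) (by omega)]
    calc ((β : ℝ) : EReal) = ((β : ℝ) : EReal) + 0 := by rw [add_zero]
      _ ≤ _ := add_le_add (hcoeffs (i+2) (by omega)) (hPM (i+2) (k2+2))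
  have hb2 : ((β : ℝ) : EReal) ≤ v ((a - 1) * (if k2 + 2 = q then 1 else 0)) := by
    rw [hvmul]
    calc ((β : ℝ) : EReal) = ((β : ℝ) : EReal) + 0 := by rw [add_zero]
      _ ≤ _ := add_le_add (le_trans (by exact_mod_cast hβN) hva)
          (by split_ifs <;> simp [hv0, hv1])
  have hb3 : ((β : ℝ) : EReal) ≤ v (∑ i ∈ Finset.range q,
      coeff (k2+2) (PowerSeries.X ^ i * h ^ (q - i)) * ((q.choose i : ℕ) : L)) := by
    refine v_sum0 v hv0 hvadd _ _ fun i hi => ?_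
    rw [Finset.mem_range] at hi
    rw [hvmul]
    have hco : ((β : ℝ) : EReal) ≤ v (coeff (k2+2) (PowerSeries.X ^ i * h ^ (q - i))) := by
      rcases le_or_gt i (k2+2) with hik | hik
      · rw [show k2 + 2 = (k2 + 2 - i) + i by omega, PowerSeries.coeff_X_pow_mul]
        refine v_coeff_pow_ge v hv0 hv1 hvmul hvadd hh0 hhint (by exact_mod_cast hβ0)
          (q - i) (by omega) (k2 + 2 - i) fun i' hi' => ?_
        exact hcoeffs i' (by omega)
      · rw [X_pow_dvd_iff.mp (dvd_mul_right _ _) _ hik, hv0]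
        exact le_top
    calc ((β : ℝ) : EReal) = ((β : ℝ) : EReal) + 0 := by rw [add_zero]
      _ ≤ _ := add_le_add hco (v_natcast v hv0 hv1 hvadd _)
  have hcomb : ((β : ℝ) : EReal) ≤ v (coeff (k2+2) sa * (π - π ^ (k2+2))) := by
    rw [hid]
    exact v_sub0 v hv1 hvmul hvadd (v_add0 v hvadd hb1 hb2) hb3
  have hππ : v (π - π ^ (k2+2)) = ((1 / (e : ℝ) : ℝ) : EReal) := by
    have hfact : π - π ^ (k2+2) = π * (1 - π ^ (k2+1)) := by ring
    have hpow : v (π ^ (k2+1)) = ((((k2+1 : ℕ) : ℝ) * (1 / (e : ℝ)) : ℝ) : EReal) :=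
      v_pow_gen v hv1 hvmul hπ (k2+1)
    have hpos : (0 : EReal) < v (π ^ (k2+1)) := by
      rw [hpow]
      have : (0 : ℝ) < ((k2+1 : ℕ) : ℝ) * (1 / (e : ℝ)) := by
        apply mul_pos _ (one_div_pos.mpr hepos)
        exact_mod_cast Nat.succ_pos k2
      exact_mod_cast this
    rw [hfact, hvmul, v_one_sub v hv1 hvmul hvadd hpos, add_zero, hπ]
  rw [hvmul, hππ] at hcomb
  have := ereal_sub_le (vne_bot v hv0 hv1 hvmul _) hcomb
  refine le_trans (le_of_eq ?_) this
  apply congrArg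
  push_cast
  ring



include hv0 hv1 hvmul hvadd in
lemma part_ii (π : L) (q e : ℕ) (hq : 2 ≤ q) (he : 0 < e)
    (hπ : v π = ((1 / (e : ℝ) : ℝ) : EReal))
    (s r : ℝ) (hs : 0 < s) (hsr : s ≤ r) :
    ∃ N : ℕ, ∀ a : L, (((N : ℝ) / (e : ℝ) : ℝ) : EReal) ≤ v (a - 1) →
      ∀ sa : PowerSeries L,
        PowerSeries.coeff 0 sa = 0 → PowerSeries.coeff 1 sa = a →
        (∀ n : ℕ, (0 : EReal) ≤ v (PowerSeries.coeff n sa)) →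
        pscomp sa (PowerSeries.X ^ q + PowerSeries.C π * PowerSeries.X)
          = sa ^ q + PowerSeries.C π * sa →
        ∀ f : PowerSeries L,
          (⨅ t : Set.Icc s r, ⨅ n : ℕ,
              (v (PowerSeries.coeff n f) + (((n : ℝ) * (t : ℝ) : ℝ) : EReal))) + 1
            ≤ ⨅ t : Set.Icc s r, ⨅ n : ℕ,
                (v (PowerSeries.coeff n (pscomp f sa - f))
                  + (((n : ℝ) * (t : ℝ) : ℝ) : EReal)) := by
  have hepos : (0 : ℝ) < (e : ℝ) := by exact_mod_cast he
  set K : ℕ := Nat.ceil (1/s) + 1 with hK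
  refine ⟨e + K, ?_⟩
  intro a hva sa h0 h1 hint hcomp f
  have hQ := hQ_lemma v hv0 hv1 hvmul hvadd π q e hq he hπ (e + K) (Nat.le_add_right e K)
    a hva sa h0 h1 hint hcomp
  set h : PowerSeries L := sa - PowerSeries.X with hh
  have hh0 : coeff 0 h = 0 := by
    rw [hh, map_sub, h0, PowerSeries.coeff_X, if_neg (by omega : ¬ (0:ℕ) = 1), sub_zero]
  have hh1 : coeff 1 h = a - 1 := by
    rw [hh, map_sub, h1, PowerSeries.coeff_X, if_pos rfl]
  have hhk : ∀ k : ℕ, 2 ≤ k → coeff k h = coeff k sa := by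
    intro k hk
    rw [hh, map_sub, PowerSeries.coeff_X, if_neg (by omega : ¬ k = 1), sub_zero]
  have hva0 : (0 : EReal) ≤ v (a - 1) :=
    le_trans (by exact_mod_cast div_nonneg (Nat.cast_nonneg _) hepos.le) hva
  have hhint : ∀ i : ℕ, (0 : EReal) ≤ v (coeff i h) := by
    intro i
    match i with
    | 0 => rw [hh0, hv0]; exact le_top
    | 1 => rw [hh1]; exact hva0
    | (i+2) => rw [hhk (i+2) (by omega)]; exact hint (i+2)
  have hsa_bin : sa = PowerSeries.X + h := by rw [hh]; ring
  have hbin : ∀ m k : ℕ, coeff k (sa ^ m)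
      = (∑ i ∈ Finset.range m, coeff k (PowerSeries.X ^ i * h ^ (m - i)) * ((m.choose i : ℕ) : L))
        + (if k = m then 1 else 0) := by
    intro m k
    conv_lhs => rw [hsa_bin]
    rw [add_pow, map_sum, Finset.sum_range_succ]
    congr 1
    · refine Finset.sum_congr rfl fun i hi => ?_
      rw [show ((m.choose i : ℕ) : PowerSeries L) = PowerSeries.C ((m.choose i : ℕ) : L) from
        (map_natCast _ _).symm, PowerSeries.coeff_mul_C]
    · simp [PowerSeries.coeff_X_pow]
  have hKs : (1/s : ℝ) ≤ (K : ℝ) := by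
    rw [hK]
    push_cast
    linarith [Nat.le_ceil (1/s)]
  -- key estimate on the coefficients of h
  have hstar : ∀ t : ℝ, s ≤ t → ∀ k : ℕ,
      (((1 + t : ℝ)) : EReal) ≤ v (coeff k h) + (((k : ℝ) * t : ℝ) : EReal) := by
    intro t hst k
    have ht0 : (0 : ℝ) < t := hs.trans_le hst
    match k with
    | 0 =>
        rw [hh0, hv0, EReal.top_add_of_ne_bot (EReal.coe_ne_bot _)]
        exact le_top
    | 1 =>
        rw [hh1]
        have h1N : ((1 : ℝ) : EReal) ≤ v (a - 1) := by
          refine le_trans ?_ hva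
          apply EReal.coe_le_coe_iff.mpr
          rw [le_div_iff₀ hepos]
          push_cast
          linarith [Nat.cast_nonneg (α := ℝ) (Nat.ceil (1/s))]
        have hcast : ((((1:ℕ) : ℝ) * t : ℝ) : EReal) = ((t : ℝ) : EReal) := by norm_num
        rw [hcast, show ((1 + t : ℝ) : EReal) = ((1:ℝ) : EReal) + ((t:ℝ) : EReal) from
          EReal.coe_add 1 t]
        exact add_le_add h1N le_rfl
    | (k+2) =>
        rcases le_or_gt (k+2) (K+1) with hkK | hkK
        · have hQk := hQ (k+2) (by omega) (by omega)
          have h1le : ((1 : ℝ) : EReal) ≤ v (coeff (k+2) h) := by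
            rw [hhk (k+2) (by omega)]
            refine le_trans ?_ hQk
            apply EReal.coe_le_coe_iff.mpr
            rw [le_div_iff₀ hepos]
            have h2 : ((k:ℝ) + 2) ≤ (K : ℝ) + 1 := by exact_mod_cast hkK
            rw [hK] at h2 ⊢
            push_cast at h2 ⊢
            linarith
          have hreal : (1 + t : ℝ) ≤ 1 + (((k+2:ℕ) : ℝ) * t) := by
            push_cast
            nlinarith [ht0.le]
          calc ((1 + t : ℝ) : EReal) ≤ ((1 + (((k+2:ℕ) : ℝ) * t) : ℝ) : EReal) := by
                exact_mod_cast hreal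
            _ = ((1:ℝ) : EReal) + ((((k+2:ℕ) : ℝ) * t : ℝ) : EReal) := EReal.coe_add _ _
            _ ≤ _ := add_le_add h1le le_rfl
        · have hks : (1 : ℝ) ≤ ((k:ℝ) + 1) * s := by
            have hKk : (K : ℝ) ≤ (k : ℝ) + 1 := by
              have h3 : K ≤ k + 1 := by omega
              have h4 := (Nat.cast_le (α := ℝ)).mpr h3
              exact le_trans h4 (by push_cast; linarith)
            calc (1 : ℝ) = (1/s) * s := by field_simp
              _ ≤ ((k:ℝ) + 1) * s := by
                  apply mul_le_mul_of_nonneg_right _ hs.le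
                  linarith [hKs]
          have hreal : (1 + t : ℝ) ≤ (((k+2:ℕ) : ℝ) * t) := by
            have hts' : ((k:ℝ) + 1) * s ≤ ((k:ℝ) + 1) * t := by
              apply mul_le_mul_of_nonneg_left hst
              positivity
            push_cast
            nlinarith
          calc ((1 + t : ℝ) : EReal) ≤ (((((k+2:ℕ)) : ℝ) * t : ℝ) : EReal) := by
                exact_mod_cast hreal
            _ = 0 + _ := (zero_add _).symm
            _ ≤ _ := add_le_add (hhint (k+2)) le_rfl
  -- per-(n,m) bound on the matrix entries
  have hDt : ∀ t : ℝ, s ≤ t → ∀ n m : ℕ, m ≤ n →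
      (((1 : ℝ) + (m : ℝ) * t : ℝ) : EReal)
        ≤ v (coeff n (sa ^ m) - (if n = m then 1 else 0)) + (((n : ℝ) * t : ℝ) : EReal) := by
    intro t hst n m hmn
    have ht0 : (0 : ℝ) < t := hs.trans_le hst
    have hD : coeff n (sa ^ m) - (if n = m then 1 else 0)
        = ∑ i ∈ Finset.range m, coeff n (PowerSeries.X ^ i * h ^ (m - i)) * ((m.choose i : ℕ) : L) := by
      rw [hbin m n]; ring
    rw [hD]
    refine v_sum_c v hv0 hvadd (EReal.coe_ne_bot _) _ _ fun i hi => ?_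
    rw [Finset.mem_range] at hi
    rw [hvmul]
    rcases le_or_gt i n with hin | hin
    · have hni : (n - i) + i = n := by omega
      have hcx := PowerSeries.coeff_X_pow_mul (h ^ (m - i)) i (n - i)
      rw [hni] at hcx
      rw [hcx]
      have hA := vt_coeff_pow v hv0 hvmul hvadd (hstar t hst) (m - i) (by omega) (n - i)
      have hsubm : ((m - i : ℕ) : ℝ) = (m : ℝ) - (i : ℝ) := by
        push_cast [Nat.cast_sub hi.le]
        ring
      have hsubn : ((n - i : ℕ) : ℝ) = (n : ℝ) - (i : ℝ) := by
        push_cast [Nat.cast_sub hin]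
        ring
      have h1j : (1 : ℝ) ≤ (m : ℝ) - (i : ℝ) := by
        have : 1 ≤ m - i := by omega
        rw [← hsubm]
        exact_mod_cast this
      have hr1 : ((1 : ℝ) + (m : ℝ) * t : ℝ) ≤ ((m - i : ℕ) : ℝ) * (1 + t) + (i : ℝ) * t := by
        rw [hsubm]
        nlinarith [ht0.le]
      have hsplit : (((n : ℝ) * t : ℝ) : EReal)
          = (((n - i : ℕ) : ℝ) * t : ℝ) + (((i : ℝ) * t : ℝ) : EReal) := by
        rw [← EReal.coe_add]
        apply congrArg
        rw [hsubn]
        ring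
      calc (((1 : ℝ) + (m : ℝ) * t : ℝ) : EReal)
          ≤ ((((m - i : ℕ) : ℝ) * (1 + t) + (i : ℝ) * t : ℝ) : EReal) := by exact_mod_cast hr1
        _ = ((((m - i : ℕ) : ℝ) * (1 + t) : ℝ) : EReal) + (((i : ℝ) * t : ℝ) : EReal) :=
            EReal.coe_add _ _
        _ ≤ (v (coeff (n - i) (h ^ (m - i))) + ((((n - i : ℕ) : ℝ) * t : ℝ) : EReal))
              + (((i : ℝ) * t : ℝ) : EReal) := add_le_add hA le_rfl
        _ = v (coeff (n - i) (h ^ (m - i))) + (((n : ℝ) * t : ℝ) : EReal) := by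
            rw [add_assoc, ← hsplit]
        _ = (v (coeff (n - i) (h ^ (m - i))) + 0) + (((n : ℝ) * t : ℝ) : EReal) := by
            rw [add_zero]
        _ ≤ _ := add_le_add (add_le_add le_rfl (v_natcast v hv0 hv1 hvadd _)) le_rfl
    · have hzero : coeff n (PowerSeries.X ^ i * h ^ (m - i)) = 0 :=
        X_pow_dvd_iff.mp (dvd_mul_right _ _) _ hin
      rw [hzero, hv0, EReal.top_add_of_ne_bot (vne_bot v hv0 hv1 hvmul _),
        EReal.top_add_of_ne_bot (EReal.coe_ne_bot _)]
      exact le_top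
  -- conclusion
  have hc : ∀ n : ℕ, coeff n (pscomp f sa)
      = ∑ m ∈ Finset.range (n + 1), coeff m f * coeff n (sa ^ m) := by
    intro n; simp [pscomp, PowerSeries.coeff_mk]
  refine le_iInf fun t => le_iInf fun n => ?_
  have hts : s ≤ (t : ℝ) := t.2.1
  have hdelta : ∑ m ∈ Finset.range (n + 1), coeff m f * (if n = m then 1 else 0)
      = coeff n f := by
    rw [Finset.sum_eq_single n]
    · rw [if_pos rfl, mul_one]
    · intro b _ hb
      rw [if_neg (fun hnb => hb hnb.symm), mul_zero]
    · intro hn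
      exact absurd (Finset.self_mem_range_succ n) hn
  have hDrw : coeff n (pscomp f sa - f)
      = ∑ m ∈ Finset.range (n + 1),
          coeff m f * (coeff n (sa ^ m) - (if n = m then 1 else 0)) := by
    rw [map_sub, hc n]
    simp only [mul_sub]
    rw [Finset.sum_sub_distrib, hdelta]
  rw [hDrw]
  refine v_sum_c v hv0 hvadd (EReal.coe_ne_bot _) _ _ fun m hm => ?_
  rw [Finset.mem_range] at hm
  have hmn : m ≤ n := by omega
  rw [hvmul]
  have hD := hDt (t : ℝ) hts n m hmn
  calc (⨅ t : Set.Icc s r, ⨅ n : ℕ,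
        (v (PowerSeries.coeff n f) + (((n : ℝ) * (t : ℝ) : ℝ) : EReal))) + 1
      ≤ (v (coeff m f) + (((m : ℝ) * ((t : Set.Icc s r) : ℝ) : ℝ) : EReal)) + 1 :=
        add_le_add (le_trans (iInf_le _ t) (iInf_le _ m)) le_rfl
    _ = v (coeff m f) + (((1 : ℝ) + (m : ℝ) * ((t : Set.Icc s r) : ℝ) : ℝ) : EReal) := by
        rw [add_assoc]
        congr 1
        rw [show (1 : EReal) = ((1 : ℝ) : EReal) from rfl, ← EReal.coe_add]
        apply congrArg
        ring
    _ ≤ v (coeff m f) + (v (coeff n (sa ^ m) - (if n = m then 1 else 0))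
          + (((n : ℝ) * ((t : Set.Icc s r) : ℝ) : ℝ) : EReal)) := add_le_add le_rfl hD
    _ = _ := (add_assoc _ _ _).symm

end Main

/-- Let `L` be a field (containing `F`) with valuation `v` extending `v_p`
(`v π = 1/e`, `q` the residue cardinality).  For `a ∈ O_F`, `[a]` (here `sa`) denotes the power
series in `O_F[[X]]` with `[a](X) ≡ aX mod X²` and `[a]∘[π] = [π]∘[a]`, `[π](X) = X^q + π X`.
With `v^{[s,r]}(f) := ⨅_{t∈[s,r]} ⨅_n (v (coeff n f) + n t)`:
(i) for every `a ∈ O_F^×`, every `f ∈ L[[u]]` and all `0 < s ≤ r`,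
    `v^{[s,r]}(f∘[a]) = v^{[s,r]}(f)`;
(ii) for all `0 < s ≤ r` there exists `N` such that for every `a ∈ 1 + π^N O_F`
    (i.e. `v (a-1) ≥ N/e`) and every `f ∈ L[[u]]`,
    `v^{[s,r]}(f∘[a] - f) ≥ v^{[s,r]}(f) + 1`. -/
theorem stmt_16
    (L : Type*) [Field L]
    (v : L → EReal)
    (hv0 : v 0 = ⊤) (hv1 : v 1 = 0)
    (hvmul : ∀ x y : L, v (x * y) = v x + v y)
    (hvadd : ∀ x y : L, min (v x) (v y) ≤ v (x + y))
    (π : L) (q e : ℕ) (hq : 2 ≤ q) (he : 0 < e)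
    (hπ : v π = ((1 / (e : ℝ) : ℝ) : EReal)) :
    -- (i)
    (∀ a : L, v a = 0 →
      ∀ sa : PowerSeries L,
        PowerSeries.coeff 0 sa = 0 → PowerSeries.coeff 1 sa = a →
        (∀ n : ℕ, (0 : EReal) ≤ v (PowerSeries.coeff n sa)) →
        pscomp sa (PowerSeries.X ^ q + PowerSeries.C π * PowerSeries.X)
          = sa ^ q + PowerSeries.C π * sa →
        ∀ f : PowerSeries L, ∀ s r : ℝ, 0 < s → s ≤ r →
          (⨅ t : Set.Icc s r, ⨅ n : ℕ,
              (v (PowerSeries.coeff n (pscomp f sa)) + (((n : ℝ) * (t : ℝ) : ℝ) : EReal)))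
            = ⨅ t : Set.Icc s r, ⨅ n : ℕ,
                (v (PowerSeries.coeff n f) + (((n : ℝ) * (t : ℝ) : ℝ) : EReal))) ∧
    -- (ii)
    (∀ s r : ℝ, 0 < s → s ≤ r →
      ∃ N : ℕ, ∀ a : L, (((N : ℝ) / (e : ℝ) : ℝ) : EReal) ≤ v (a - 1) →
        ∀ sa : PowerSeries L,
          PowerSeries.coeff 0 sa = 0 → PowerSeries.coeff 1 sa = a →
          (∀ n : ℕ, (0 : EReal) ≤ v (PowerSeries.coeff n sa)) →
          pscomp sa (PowerSeries.X ^ q + PowerSeries.C π * PowerSeries.X)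
            = sa ^ q + PowerSeries.C π * sa →
          ∀ f : PowerSeries L,
            (⨅ t : Set.Icc s r, ⨅ n : ℕ,
                (v (PowerSeries.coeff n f) + (((n : ℝ) * (t : ℝ) : ℝ) : EReal))) + 1
              ≤ ⨅ t : Set.Icc s r, ⨅ n : ℕ,
                  (v (PowerSeries.coeff n (pscomp f sa - f))
                    + (((n : ℝ) * (t : ℝ) : ℝ) : EReal))) := by
  constructor
  · intro a ha sa h0 h1 hint _hcomp f s r hs hsr
    exact part_i v hv0 hv1 hvmul hvadd a ha sa h0 h1 hint f s r hs hsr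
  · intro s r hs hsr
    exact part_ii v hv0 hv1 hvmul hvadd π q e hq he hπ s r hs hsr
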